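/- For every p ∈ (0,1) with p ≠ 1/2, the Kearns–Saul exponent is strictly smaller than the Hoeffding exponent: (1−2p) / (4·log((1−p)/p)) < 1/8. -/

import Mathlib

lemma two_mul_lt_log_div (x : ℝ) (hx0 : 0 < x) (hx1 : x < 1) :
    2*x < Real.log (1+x) - Real.log (1-x) := by
  set f : ℝ → ℝ := fun x => Real.log (1+x) - Real.log (1-x) - 2*x with hf
  have hmono : StrictMonoOn f (Set.Ico (0:ℝ) 1) := by
    apply strictMonoOn_of_deriv_pos (convex_Ico 0 1)
    · apply ContinuousOn.sub (ContinuousOn.sub ?_ ?_) (continuousOn_const.mul continuousOn_id)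
      · exact Real.continuousOn_log.comp (continuousOn_const.add continuousOn_id)
          (fun y hy => by simp only [Set.mem_Ico] at hy; intro h; simp at h; linarith [hy.1])
      · exact Real.continuousOn_log.comp (continuousOn_const.sub continuousOn_id)
          (fun y hy => by simp only [Set.mem_Ico] at hy; intro h; simp at h; linarith [hy.2])
    · intro y hy
      rw [interior_Ico] at hy
      obtain ⟨hy0, hy1⟩ := hy
      have h1 : HasDerivAt (fun x : ℝ => Real.log (1+x)) (1+y)⁻¹ y := by
        have := (Real.hasDerivAt_log (by linarith : (1:ℝ)+y ≠ 0)).comp y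
          ((hasDerivAt_id y).const_add 1)
        simp at this; exact this
      have h2 : HasDerivAt (fun x : ℝ => Real.log (1-x)) (-(1-y)⁻¹) y := by
        have := (Real.hasDerivAt_log (by linarith : (1:ℝ)-y ≠ 0)).comp y
          ((hasDerivAt_id y).const_sub 1)
        simp at this; exact this
      have h3 : HasDerivAt f ((1+y)⁻¹ + (1-y)⁻¹ - 2) y := by
        have := ((h1.sub h2).sub ((hasDerivAt_id y).const_mul 2))
        simp only [sub_neg_eq_add, mul_one] at this; exact this
      rw [h3.deriv]
      have hy1' : (0:ℝ) < 1 - y := by linarith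
      have hy0' : (0:ℝ) < 1 + y := by linarith
      rw [sub_pos]
      have heq : (1+y)⁻¹ + (1-y)⁻¹ = 2 / ((1+y)*(1-y)) := by
        field_simp; ring
      rw [heq, lt_div_iff₀ (by positivity)]
      nlinarith
  have h0 : f 0 = 0 := by simp [hf]
  have := hmono (Set.mem_Ico.mpr ⟨le_refl 0, by norm_num⟩)
    (Set.mem_Ico.mpr ⟨le_of_lt hx0, hx1⟩) hx0
  rw [h0] at this
  simp only [hf] at this
  linarith

/-- For `p ∈ (0,1)`, `p ≠ 1/2`, the Kearns–Saul exponent is strictly smaller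
than the Hoeffding exponent `1/8`. -/
theorem kearns_saul_lt_hoeffding (p : ℝ) (hp0 : 0 < p) (hp1 : p < 1) (hp : p ≠ 1/2) :
    (1 - 2*p) / (4 * Real.log ((1 - p) / p)) < 1/8 := by
  have hlog : Real.log ((1-p)/p) = Real.log (1-p) - Real.log p :=
    Real.log_div (by linarith) (ne_of_gt hp0)
  rcases lt_or_gt_of_ne hp with h | h
  · -- p < 1/2, set x = 1 - 2p
    set x := 1 - 2*p with hx
    have hx0 : 0 < x := by simp only [hx]; linarith
    have hx1 : x < 1 := by simp only [hx]; linarith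
    have key := two_mul_lt_log_div x hx0 hx1
    have e1 : 1 + x = 2*(1-p) := by simp only [hx]; ring
    have e2 : 1 - x = 2*p := by simp only [hx]; ring
    have : Real.log (1+x) - Real.log (1-x) = Real.log (1-p) - Real.log p := by
      rw [e1, e2, Real.log_mul two_ne_zero (by linarith), Real.log_mul two_ne_zero (ne_of_gt hp0)]
      ring
    rw [this] at key
    rw [hlog]
    rw [div_lt_div_iff₀ (by linarith) (by norm_num)]
    linarith
  · -- p > 1/2, set x = 2p - 1
    set x := 2*p - 1 with hx
    have hx0 : 0 < x := by simp only [hx]; linarith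
    have hx1 : x < 1 := by simp only [hx]; linarith
    have key := two_mul_lt_log_div x hx0 hx1
    have e1 : 1 + x = 2*p := by simp only [hx]; ring
    have e2 : 1 - x = 2*(1-p) := by simp only [hx]; ring
    have : Real.log (1+x) - Real.log (1-x) = Real.log p - Real.log (1-p) := by
      rw [e1, e2, Real.log_mul two_ne_zero (ne_of_gt hp0), Real.log_mul two_ne_zero (by linarith)]
      ring
    rw [this] at key
    rw [hlog]
    have hneg : 4 * (Real.log (1-p) - Real.log p) < 0 := by linarith
    rw [div_lt_iff_of_neg hneg]
    linarith
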